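/- Let N be a finite nonempty set with weights φ_j > 0. For nonnegative requests (x_j)_{j∈N} and resource X ≥ 0, define the fair share f := max over proper subsets M ⊊ N of (X − Σ_{j∈M} x_j)/(Σ_{j∈N\M} φ_j) and the unmet demand ȳ_j := max{x_j − φ_j·f, 0}; analogously define ȳ'_j from requests (x'_j)_{j∈N} and resource X' ≥ 0. Then Σ_{j∈N} |ȳ_j − ȳ'_j| ≤ Σ_{j∈N} |x_j − x'_j| + |X − X'|. -/

import Mathlib

/-- The fair share `f := max_{M ⊊ N} (X - ∑_{j∈M} x j) / (∑_{j∈N\M} φ j)`,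
where the maximum ranges over all proper subsets of `N`. -/
noncomputable def fairShare {ι : Type*} [DecidableEq ι] (N : Finset ι) (hN : N.Nonempty)
    (φ x : ι → ℝ) (X : ℝ) : ℝ :=
  (N.powerset.erase N).sup'
    ⟨∅, Finset.mem_erase.mpr ⟨hN.ne_empty.symm, Finset.empty_mem_powerset N⟩⟩
    (fun M => (X - ∑ j ∈ M, x j) / ∑ j ∈ N \ M, φ j)

section Aux
variable {ι : Type*} [DecidableEq ι]

lemma fs_mem_aux {N M : Finset ι} (h : M ∈ N.powerset.erase N) :
    M ⊆ N ∧ (N \ M).Nonempty := by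
  rw [Finset.mem_erase, Finset.mem_powerset] at h
  refine ⟨h.2, ?_⟩
  rw [Finset.sdiff_nonempty]
  intro hsub
  exact h.1 (Finset.Subset.antisymm h.2 hsub)

lemma fs_denom_pos {N M : Finset ι} {φ : ι → ℝ} (hφ : ∀ j ∈ N, 0 < φ j)
    (h : M ∈ N.powerset.erase N) : 0 < ∑ j ∈ N \ M, φ j := by
  obtain ⟨hMN, hne⟩ := fs_mem_aux h
  exact Finset.sum_pos (fun j hj => hφ j (Finset.sdiff_subset hj)) hne

lemma fs_le {N : Finset ι} (hN : N.Nonempty) (φ x : ι → ℝ) (X : ℝ)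
    {M : Finset ι} (h : M ∈ N.powerset.erase N) :
    (X - ∑ j ∈ M, x j) / ∑ j ∈ N \ M, φ j ≤ fairShare N hN φ x X := by
  unfold fairShare
  exact Finset.le_sup' (fun M => (X - ∑ j ∈ M, x j) / ∑ j ∈ N \ M, φ j) h

end Aux

section Aux2
variable {ι : Type*} [DecidableEq ι]

lemma fs_mono {N : Finset ι} (hN : N.Nonempty) {φ x x' : ι → ℝ} {X X' : ℝ}
    (hφ : ∀ j ∈ N, 0 < φ j)
    (hle : ∀ j ∈ N, x j ≤ x' j) (hXle : X' ≤ X) :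
    fairShare N hN φ x' X' ≤ fairShare N hN φ x X := by
  apply Finset.sup'_le
  intro M hM
  refine le_trans ?_ (fs_le hN φ x X hM)
  have hd := fs_denom_pos hφ hM
  have hMN := (fs_mem_aux hM).1
  rw [div_le_div_iff_of_pos_right hd]
  have : ∑ j ∈ M, x j ≤ ∑ j ∈ M, x' j :=
    Finset.sum_le_sum fun j hj => hle j (hMN hj)
  linarith

end Aux2

section Aux3
variable {ι : Type*} [DecidableEq ι]

lemma fs_sum_unmet {N : Finset ι} (hN : N.Nonempty) {φ x : ι → ℝ} {X : ℝ}
    (hφ : ∀ j ∈ N, 0 < φ j) (hx : ∀ j ∈ N, 0 ≤ x j) (hX : 0 ≤ X) :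
    ∑ j ∈ N, max (x j - φ j * fairShare N hN φ x X) 0 =
      max ((∑ j ∈ N, x j) - X) 0 := by
  set f := fairShare N hN φ x X with hf
  rcases le_or_gt (∑ j ∈ N, x j) X with hcase | hcase
  · -- abundant resource: everything is zero
    have hzero : ∀ j ∈ N, max (x j - φ j * f) 0 = 0 := by
      intro j hj
      have hMem : N.erase j ∈ N.powerset.erase N := by
        rw [Finset.mem_erase, Finset.mem_powerset]
        exact ⟨fun h => Finset.notMem_erase j N (by rw [h]; exact hj), Finset.erase_subset j N⟩
      have hle := fs_le hN φ x X hMem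
      have hsum : ∑ k ∈ N.erase j, x k = (∑ k ∈ N, x k) - x j :=
        Finset.sum_erase_eq_sub hj
      have hφj := hφ j hj
      rw [hsum, Finset.sdiff_erase_self hj, Finset.sum_singleton] at hle
      rw [div_le_iff₀ hφj] at hle
      have : x j ≤ φ j * f := by nlinarith
      exact max_eq_right (by linarith)
    rw [Finset.sum_congr rfl hzero, Finset.sum_const_zero]
    exact (max_eq_right (by linarith)).symm
  · -- scarce resource
    obtain ⟨M, hM, hfM⟩ := Finset.exists_mem_eq_sup'
      ⟨∅, Finset.mem_erase.mpr ⟨hN.ne_empty.symm, Finset.empty_mem_powerset N⟩⟩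
      (fun M => (X - ∑ j ∈ M, x j) / ∑ j ∈ N \ M, φ j)
    have hfM : f = (X - ∑ j ∈ M, x j) / ∑ j ∈ N \ M, φ j := hfM
    obtain ⟨hMN, hMne⟩ := fs_mem_aux hM
    have hD : 0 < ∑ j ∈ N \ M, φ j := fs_denom_pos hφ hM
    set D : ℝ := ∑ j ∈ N \ M, φ j with hDdef
    have hfD : f * D = X - ∑ j ∈ M, x j := by
      rw [hfM]; field_simp
    -- (i) j ∈ M  →  x j ≤ φ j * f
    have hin : ∀ j ∈ M, x j ≤ φ j * f := by
      intro j hj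
      have hjN : j ∈ N := hMN hj
      have hMem : M.erase j ∈ N.powerset.erase N := by
        rw [Finset.mem_erase, Finset.mem_powerset]
        refine ⟨fun h => ?_, (Finset.erase_subset j M).trans hMN⟩
        exact Finset.notMem_erase j M (by rw [h]; exact hjN)
      have hle := fs_le hN φ x X hMem
      have hsumx : ∑ k ∈ M.erase j, x k = (∑ k ∈ M, x k) - x j :=
        Finset.sum_erase_eq_sub hj
      have hsdiff : N \ M.erase j = insert j (N \ M) := by
        rw [Finset.sdiff_erase hjN]
      have hjnm : j ∉ N \ M := fun h => (Finset.mem_sdiff.mp h).2 hj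
      have hsumφ : ∑ k ∈ N \ M.erase j, φ k = φ j + D := by
        rw [hsdiff, Finset.sum_insert hjnm]
      have hφj := hφ j hjN
      rw [hsumx, hsumφ, div_le_iff₀ (by linarith)] at hle
      nlinarith
    -- (ii) j ∈ N \ M  →  φ j * f ≤ x j
    have hout : ∀ j ∈ N \ M, φ j * f ≤ x j := by
      intro j hj
      obtain ⟨hjN, hjM⟩ := Finset.mem_sdiff.mp hj
      have hφj := hφ j hjN
      by_cases hins : insert j M = N
      · -- N \ M = {j}
        have hsd : N \ M = {j} := by
          rw [← hins]
          ext k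
          simp only [Finset.mem_sdiff, Finset.mem_insert, Finset.mem_singleton]
          constructor
          · rintro ⟨hk | hk, hk2⟩
            · exact hk
            · exact absurd hk hk2
          · rintro rfl; exact ⟨Or.inl rfl, hjM⟩
        have hDj : D = φ j := by rw [hDdef, hsd, Finset.sum_singleton]
        have hsumN : ∑ k ∈ N, x k = (∑ k ∈ M, x k) + x j := by
          rw [← hins, Finset.sum_insert hjM]; ring
        have hkey : φ j * f = X - ∑ k ∈ M, x k := by
          rw [mul_comm, ← hDj]; exact hfD
        linarith
      · have hMem : insert j M ∈ N.powerset.erase N := by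
          rw [Finset.mem_erase, Finset.mem_powerset]
          exact ⟨hins, Finset.insert_subset hjN hMN⟩
        have hle := fs_le hN φ x X hMem
        have hsumx : ∑ k ∈ insert j M, x k = x j + ∑ k ∈ M, x k :=
          Finset.sum_insert hjM
        have hsdiff : N \ insert j M = (N \ M).erase j := by
          ext k
          simp only [Finset.mem_sdiff, Finset.mem_insert, Finset.mem_erase]
          tauto
        have hsumφ : ∑ k ∈ N \ insert j M, φ k = D - φ j := by
          rw [hsdiff, hDdef]
          exact Finset.sum_erase_eq_sub hj
        have hDj : 0 < D - φ j := by
          have := fs_denom_pos hφ hMem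
          rwa [hsumφ] at this
        rw [hsumx, hsumφ, div_le_iff₀ hDj] at hle
        nlinarith
    -- combine
    rw [← Finset.sum_sdiff hMN]
    have h1 : ∀ j ∈ M, max (x j - φ j * f) 0 = 0 := fun j hj =>
      max_eq_right (by linarith [hin j hj])
    have h2 : ∀ j ∈ N \ M, max (x j - φ j * f) 0 = x j - φ j * f := fun j hj =>
      max_eq_left (by linarith [hout j hj])
    rw [Finset.sum_congr rfl h1, Finset.sum_congr rfl h2, Finset.sum_const_zero, add_zero]
    have hsplit : ∑ j ∈ N, x j = (∑ j ∈ N \ M, x j) + ∑ j ∈ M, x j :=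
      (Finset.sum_sdiff hMN).symm
    have : ∑ j ∈ N \ M, (x j - φ j * f) = (∑ j ∈ N \ M, x j) - D * f := by
      rw [Finset.sum_sub_distrib, hDdef, Finset.sum_mul]
    rw [this, max_eq_left (by linarith)]
    have hDf : D * f = X - ∑ j ∈ M, x j := by rw [mul_comm]; exact hfD
    linarith

end Aux3

section Aux4
variable {ι : Type*} [DecidableEq ι]

lemma max_zero_sub_le {a b : ℝ} (h : b ≤ a) : max a 0 - max b 0 ≤ a - b := by
  have h1 : max a 0 ≤ max b 0 + (a - b) :=
    max_le (by linarith [le_max_left b (0:ℝ)]) (by linarith [le_max_right b (0:ℝ)])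
  linarith

lemma fs_l1_mono {N : Finset ι} (hN : N.Nonempty) {φ x x' : ι → ℝ} {X X' : ℝ}
    (hφ : ∀ j ∈ N, 0 < φ j)
    (hx : ∀ j ∈ N, 0 ≤ x j) (hx' : ∀ j ∈ N, 0 ≤ x' j) (hX : 0 ≤ X) (hX' : 0 ≤ X')
    (hle : ∀ j ∈ N, x j ≤ x' j) (hXle : X' ≤ X) :
    ∑ j ∈ N, |max (x j - φ j * fairShare N hN φ x X) 0 -
        max (x' j - φ j * fairShare N hN φ x' X') 0| ≤
      (∑ j ∈ N, (x' j - x j)) + (X - X') := by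
  set f := fairShare N hN φ x X with hfdef
  set f' := fairShare N hN φ x' X' with hfdef'
  have hff : f' ≤ f := fs_mono hN hφ hle hXle
  have hmono : ∀ j ∈ N, max (x j - φ j * f) 0 ≤ max (x' j - φ j * f') 0 := by
    intro j hj
    have hφj := hφ j hj
    have h1 : φ j * f' ≤ φ j * f := mul_le_mul_of_nonneg_left hff hφj.le
    exact max_le_max (by linarith [hle j hj]) le_rfl
  have habs : ∀ j ∈ N, |max (x j - φ j * f) 0 - max (x' j - φ j * f') 0| =
      max (x' j - φ j * f') 0 - max (x j - φ j * f) 0 := by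
    intro j hj
    rw [abs_sub_comm, abs_of_nonneg (by linarith [hmono j hj])]
  rw [Finset.sum_congr rfl habs, Finset.sum_sub_distrib,
    fs_sum_unmet hN hφ hx hX, fs_sum_unmet hN hφ hx' hX']
  have hS : ∑ j ∈ N, x j ≤ ∑ j ∈ N, x' j := Finset.sum_le_sum hle
  have := max_zero_sub_le (a := (∑ j ∈ N, x' j) - X') (b := (∑ j ∈ N, x j) - X)
    (by linarith)
  have hsum : ∑ j ∈ N, (x' j - x j) = (∑ j ∈ N, x' j) - ∑ j ∈ N, x j :=
    Finset.sum_sub_distrib _ _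
  linarith

end Aux4


/-- **ℓ¹-contraction of unmet demand.** The unmet demands
`ȳ_j := [x_j - φ_j f]₊` satisfy
`∑_{j∈N} |ȳ_j - ȳ'_j| ≤ ∑_{j∈N} |x_j - x'_j| + |X - X'|`. -/
theorem unmet_demand_contraction {ι : Type*} [DecidableEq ι]
    (N : Finset ι) (hN : N.Nonempty) (φ : ι → ℝ)
    (hφ : ∀ j ∈ N, 0 < φ j)
    (x x' : ι → ℝ) (X X' : ℝ)
    (hx : ∀ j ∈ N, 0 ≤ x j) (hx' : ∀ j ∈ N, 0 ≤ x' j)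
    (hX : 0 ≤ X) (hX' : 0 ≤ X') :
    ∑ j ∈ N,
        |max (x j - φ j * fairShare N hN φ x X) 0 -
          max (x' j - φ j * fairShare N hN φ x' X') 0| ≤
      (∑ j ∈ N, |x j - x' j|) + |X - X'| := by
  set xm : ι → ℝ := fun j => max (x j) (x' j) with hxm
  set Xm : ℝ := min X X' with hXm
  have hxm0 : ∀ j ∈ N, 0 ≤ xm j := fun j hj => le_trans (hx j hj) (le_max_left _ _)
  have hXm0 : 0 ≤ Xm := le_min hX hX'
  have h1 := fs_l1_mono hN hφ hx hxm0 hX hXm0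
    (fun j _ => le_max_left _ _) (min_le_left _ _)
  have h2 := fs_l1_mono hN hφ hx' hxm0 hX' hXm0
    (fun j _ => le_max_right _ _) (min_le_right _ _)
  have htri : ∀ j ∈ N,
      |max (x j - φ j * fairShare N hN φ x X) 0 -
        max (x' j - φ j * fairShare N hN φ x' X') 0| ≤
      |max (x j - φ j * fairShare N hN φ x X) 0 -
        max (xm j - φ j * fairShare N hN φ xm Xm) 0| +
      |max (x' j - φ j * fairShare N hN φ x' X') 0 -
        max (xm j - φ j * fairShare N hN φ xm Xm) 0| := by
    intro j hj
    have := abs_sub_le (max (x j - φ j * fairShare N hN φ x X) 0)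
      (max (xm j - φ j * fairShare N hN φ xm Xm) 0)
      (max (x' j - φ j * fairShare N hN φ x' X') 0)
    rw [abs_sub_comm (max (xm j - φ j * fairShare N hN φ xm Xm) 0)] at this
    exact this
  calc ∑ j ∈ N,
        |max (x j - φ j * fairShare N hN φ x X) 0 -
          max (x' j - φ j * fairShare N hN φ x' X') 0|
      ≤ ∑ j ∈ N, (|max (x j - φ j * fairShare N hN φ x X) 0 -
            max (xm j - φ j * fairShare N hN φ xm Xm) 0| +
          |max (x' j - φ j * fairShare N hN φ x' X') 0 -
            max (xm j - φ j * fairShare N hN φ xm Xm) 0|) :=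
        Finset.sum_le_sum htri
    _ = (∑ j ∈ N, |max (x j - φ j * fairShare N hN φ x X) 0 -
            max (xm j - φ j * fairShare N hN φ xm Xm) 0|) +
          ∑ j ∈ N, |max (x' j - φ j * fairShare N hN φ x' X') 0 -
            max (xm j - φ j * fairShare N hN φ xm Xm) 0| := Finset.sum_add_distrib
    _ ≤ ((∑ j ∈ N, (xm j - x j)) + (X - Xm)) + ((∑ j ∈ N, (xm j - x' j)) + (X' - Xm)) :=
        add_le_add h1 h2
    _ ≤ (∑ j ∈ N, |x j - x' j|) + |X - X'| := by
        have hsum : (∑ j ∈ N, (xm j - x j)) + (∑ j ∈ N, (xm j - x' j)) =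
            ∑ j ∈ N, |x j - x' j| := by
          rw [← Finset.sum_add_distrib]
          refine Finset.sum_congr rfl fun j _ => ?_
          rcases le_total (x j) (x' j) with h | h
          · rw [abs_of_nonpos (by linarith)]
            simp only [hxm, max_eq_right h]
            ring
          · rw [abs_of_nonneg (by linarith)]
            simp only [hxm, max_eq_left h]
            ring
        have hX2 : (X - Xm) + (X' - Xm) = |X - X'| := by
          rcases le_total X X' with h | h
          · rw [abs_of_nonpos (by linarith), hXm, min_eq_left h]; ring
          · rw [abs_of_nonneg (by linarith), hXm, min_eq_right h]; ring
        linarith
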